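/- For every integer k ≥ 1 and every real p with 1/2 ≤ p < 1 and q = 1 − p, 8·Σ_{j=0}^{k−1} Σ_{i=0}^{j} (choose (4·j) i)·p^i·q^(4·j−i) < 20.34. -/
import Mathlib


/-- the quantity `a'[k]` (with s = 4) is below 20.34. -/
theorem dave_aprime_bound
    (k : ℕ) (hk : 1 ≤ k) (p q : ℝ) (hp : 1 / 2 ≤ p) (hp1 : p < 1) (hq : q = 1 - p) :
    8 * ∑ j ∈ Finset.range k, ∑ i ∈ Finset.range (j + 1),
        (Nat.choose (4 * j) i : ℝ) * p ^ i * q ^ (4 * j - i)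
      < 20.34 := by
  have hq0 : (0:ℝ) ≤ q := by rw [hq]; linarith
  have hp0 : (0:ℝ) ≤ p := by linarith
  have key : ∀ j : ℕ, ∑ i ∈ Finset.range (j + 1),
      (Nat.choose (4 * j) i : ℝ) * p ^ i * q ^ (4 * j - i) ≤ ((16:ℝ)/27) ^ j := by
    intro j
    have step1 : ∑ i ∈ Finset.range (j + 1),
        (Nat.choose (4 * j) i : ℝ) * p ^ i * q ^ (4 * j - i)
        ≤ ∑ i ∈ Finset.range (j + 1),
          (3:ℝ) ^ j * ((Nat.choose (4 * j) i : ℝ) * (p/3) ^ i * q ^ (4 * j - i)) := by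
      apply Finset.sum_le_sum
      intro i hi
      have hi' : i ≤ j := Nat.lt_succ_iff.mp (Finset.mem_range.mp hi)
      have hip : p ^ i = (3:ℝ) ^ i * (p/3) ^ i := by
        rw [← mul_pow]; ring_nf
      rw [hip]
      have h3 : (3:ℝ) ^ i ≤ 3 ^ j := pow_le_pow_right₀ (by norm_num) hi'
      have hnn : (0:ℝ) ≤ (Nat.choose (4 * j) i : ℝ) * (p/3) ^ i * q ^ (4 * j - i) := by
        positivity
      calc (Nat.choose (4 * j) i : ℝ) * ((3:ℝ) ^ i * (p/3) ^ i) * q ^ (4 * j - i)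
          = (3:ℝ) ^ i * ((Nat.choose (4 * j) i : ℝ) * (p/3) ^ i * q ^ (4 * j - i)) := by ring
        _ ≤ (3:ℝ) ^ j * ((Nat.choose (4 * j) i : ℝ) * (p/3) ^ i * q ^ (4 * j - i)) :=
            mul_le_mul_of_nonneg_right h3 hnn
    have step2 : ∑ i ∈ Finset.range (j + 1),
          (3:ℝ) ^ j * ((Nat.choose (4 * j) i : ℝ) * (p/3) ^ i * q ^ (4 * j - i))
        ≤ (3:ℝ) ^ j * (p/3 + q) ^ (4 * j) := by
      rw [← Finset.mul_sum]
      apply mul_le_mul_of_nonneg_left _ (by positivity)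
      have hsub : Finset.range (j + 1) ⊆ Finset.range (4 * j + 1) := by
        apply Finset.range_subset_range.mpr; omega
      have hext : ∑ i ∈ Finset.range (j + 1),
            (Nat.choose (4 * j) i : ℝ) * (p/3) ^ i * q ^ (4 * j - i)
          ≤ ∑ i ∈ Finset.range (4 * j + 1),
            (Nat.choose (4 * j) i : ℝ) * (p/3) ^ i * q ^ (4 * j - i) := by
        apply Finset.sum_le_sum_of_subset_of_nonneg hsub
        intro i _ _; positivity
      refine hext.trans_eq ?_
      rw [add_pow]
      apply Finset.sum_congr rfl
      intro i _; ring
    have step3 : (3:ℝ) ^ j * (p/3 + q) ^ (4 * j) ≤ ((16:ℝ)/27) ^ j := by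
      have h1 : (0:ℝ) ≤ p/3 + q := by positivity
      have h2 : p/3 + q ≤ 2/3 := by rw [hq]; linarith
      have h3 : (p/3 + q) ^ (4 * j) ≤ ((2:ℝ)/3) ^ (4 * j) :=
        pow_le_pow_left₀ h1 h2 _
      calc (3:ℝ) ^ j * (p/3 + q) ^ (4 * j)
          ≤ (3:ℝ) ^ j * ((2:ℝ)/3) ^ (4 * j) :=
            mul_le_mul_of_nonneg_left h3 (by positivity)
        _ = ((16:ℝ)/27) ^ j := by
            rw [pow_mul]; rw [← mul_pow]; norm_num
    exact step1.trans (step2.trans step3)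
  have hgeom : ∑ j ∈ Finset.range k, ((16:ℝ)/27) ^ j ≤ 27/11 := by
    have h := geom_sum_eq (by norm_num : ((16:ℝ)/27) ≠ 1) k
    rw [h]
    have hpow : (0:ℝ) ≤ ((16:ℝ)/27) ^ k := by positivity
    rw [div_le_iff_of_neg (by norm_num : ((16:ℝ)/27) - 1 < 0)]
    nlinarith
  have hsum : ∑ j ∈ Finset.range k, ∑ i ∈ Finset.range (j + 1),
      (Nat.choose (4 * j) i : ℝ) * p ^ i * q ^ (4 * j - i) ≤ 27/11 := by
    calc _ ≤ ∑ j ∈ Finset.range k, ((16:ℝ)/27) ^ j :=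
          Finset.sum_le_sum fun j _ => key j
      _ ≤ 27/11 := hgeom
  norm_num
  linarith
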